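/- Let f ∈ ℂ[X₁,…,Xₙ] be a symmetric polynomial of degree d ≤ n. Then there exists a polynomial g ∈ ℂ[Z₁,…,Z_d] such that f = g(e₁,…,e_d), and moreover g has degree at most 1 in each of the variables Z_{⌊d/2⌋+1},…,Z_d. -/

import Mathlib

set_option maxHeartbeats 1000000
set_option synthInstance.maxHeartbeats 200000

open MvPolynomial Finset AddMonoidAlgebra

lemma my_esymm_isHomogeneous (σ : Type*) [Fintype σ] (R : Type*) [CommSemiring R] (k : ℕ) :
    (MvPolynomial.esymm σ R k).IsHomogeneous k := by
  rw [MvPolynomial.esymm]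
  refine MvPolynomial.IsHomogeneous.sum _ _ _ fun t ht => ?_
  have := MvPolynomial.IsHomogeneous.prod t (fun i => MvPolynomial.X i) (fun _ => 1)
    (fun i _ => MvPolynomial.isHomogeneous_X R i)
  simpa [(Finset.mem_powersetCard.1 ht).2] using this

lemma my_aux_homog {n : ℕ} (t : Fin n →₀ ℕ) (r : ℂ) :
    (MvPolynomial.esymmAlgHomMonomial (Fin n) t r).IsHomogeneous
      (t.sum fun i k => ((i : ℕ) + 1) * k) := by
  rw [esymmAlgHomMonomial, esymmAlgHom_apply, aeval_monomial, Finsupp.sum, Finsupp.prod]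
  have := (MvPolynomial.isHomogeneous_C (Fin n) (r : ℂ)).mul
    (MvPolynomial.IsHomogeneous.prod t.support
      (fun i => MvPolynomial.esymm (Fin n) ℂ ((i : ℕ) + 1) ^ t i)
      (fun i => ((i : ℕ) + 1) * t i)
      (fun i _ => (my_esymm_isHomogeneous (Fin n) ℂ ((i : ℕ) + 1)).pow (t i)))
  simpa [MvPolynomial.algebraMap_eq] using this

/-- A symmetric polynomial of degree `d ≤ n` can be written as `g(e₁,…,e_d)` where `g` has
degree at most `1` in each of the variables `Z_{⌊d/2⌋+1},…,Z_d`. -/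
theorem stmt14 (n d : ℕ) (hdn : d ≤ n) (f : MvPolynomial (Fin n) ℂ)
    (hsym : f.IsSymmetric) (hd : f.totalDegree = d) :
    ∃ g : MvPolynomial (Fin d) ℂ,
      f = MvPolynomial.aeval (fun j : Fin d => MvPolynomial.esymm (Fin n) ℂ ((j : ℕ) + 1)) g ∧
      ∀ j : Fin d, d / 2 < (j : ℕ) + 1 → g.degreeOf j ≤ 1 := by
  classical
  obtain ⟨g₀, hg₀⟩ := (esymmAlgHom_fin_bijective ℂ n).2 ⟨f, hsym⟩
  have hfval : f = aeval (fun i : Fin n => esymm (Fin n) ℂ ((i : ℕ) + 1)) g₀ := by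
    rw [← esymmAlgHom_apply, hg₀]
  have hfsum : f = ∑ t ∈ g₀.support, esymmAlgHomMonomial (Fin n) t (coeff t g₀) := by
    have h1 : f = (esymmAlgHom (Fin n) ℂ n g₀).val := by rw [hg₀]
    rw [h1]
    conv_lhs => rw [g₀.as_sum]
    rw [map_sum, AddSubmonoidClass.coe_finset_sum]
    rfl
  set W : (Fin n →₀ ℕ) → ℕ := fun t => t.sum fun i k => ((i : ℕ) + 1) * k with hWdef
  have hW : ∀ t ∈ g₀.support, W t ≤ d := by
    by_contra h
    push_neg at h
    obtain ⟨t₀, ht₀, hw⟩ := h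
    set w := W t₀ with hwdef
    have h0 : homogeneousComponent w f = 0 :=
      homogeneousComponent_eq_zero w f (by rw [hd]; exact hw)
    have h1 : homogeneousComponent w f
        = ∑ t ∈ g₀.support.filter (fun t => W t = w),
            esymmAlgHomMonomial (Fin n) t (coeff t g₀) := by
      rw [hfsum, map_sum, Finset.sum_filter]
      refine Finset.sum_congr rfl fun t ht => ?_
      rw [homogeneousComponent_of_mem ((mem_homogeneousSubmodule _ _).2
        (my_aux_homog t (MvPolynomial.coeff t g₀)))]
      by_cases h : W t = w
      · rw [if_pos h, if_pos h.symm]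
      · rw [if_neg h, if_neg (fun hh => h hh.symm)]
    have hne : g₀.support.filter (fun t => W t = w) ≠ ∅ :=
      Finset.ne_empty_of_mem (Finset.mem_filter.2 ⟨ht₀, rfl⟩)
    have hnz : (∑ t ∈ g₀.support.filter (fun t => W t = w),
        esymmAlgHomMonomial (Fin n) t (coeff t g₀)) ≠ 0 :=
      sum_ne_zero_of_injOn_supDegree (D := toLex) (Finset.nonempty_iff_ne_empty.2 hne)
      (fun t ht => by
        rw [Finset.mem_filter] at ht
        rw [Ne, ← leadingCoeff_eq_zero toLex.injective,
          leadingCoeff_esymmAlgHomMonomial t le_rfl]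
        exact mem_support_iff.1 ht.1)
      (fun t ht s hs he => by
        rw [Finset.mem_coe, Finset.mem_filter] at ht hs
        dsimp only [Function.comp] at he
        refine DFunLike.ext' <| Fin.accumulate_injective le_rfl ?_
        rwa [← ofLex_inj, DFunLike.ext'_iff,
          supDegree_esymmAlgHomMonomial (mem_support_iff.1 ht.1) t le_rfl,
          supDegree_esymmAlgHomMonomial (mem_support_iff.1 hs.1) s le_rfl] at he)
    rw [h1] at h0
    exact hnz h0
  have key : ∀ t ∈ g₀.support, ∀ i : Fin n, ((i : ℕ) + 1) * t i ≤ d := by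
    intro t ht i
    by_cases h : t i = 0
    · simp [h]
    · calc ((i : ℕ) + 1) * t i
          ≤ W t := Finset.single_le_sum (f := fun i : Fin n => ((i : ℕ) + 1) * t i)
            (fun _ _ => Nat.zero_le _) (Finsupp.mem_support_iff.2 h)
        _ ≤ d := hW t ht
  have hsub : ↑g₀.vars ⊆ Set.range (Fin.castLE hdn) := by
    intro i hi
    rw [Finset.mem_coe, mem_vars] at hi
    obtain ⟨t, ht, hit⟩ := hi
    have h1 := key t ht i
    have hti : 1 ≤ t i := Nat.one_le_iff_ne_zero.2 (Finsupp.mem_support_iff.1 hit)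
    have hid : (i : ℕ) < d := by nlinarith
    exact ⟨⟨i, hid⟩, Fin.ext rfl⟩
  obtain ⟨g, hg⟩ := exists_rename_eq_of_vars_subset_range g₀ (Fin.castLE hdn)
    (Fin.castLE_injective hdn) hsub
  refine ⟨g, ?_, ?_⟩
  · rw [hfval, ← hg, aeval_rename]
    rfl
  · intro j hj
    rw [degreeOf_le_iff]
    intro t ht
    have ht' : Finsupp.mapDomain (Fin.castLE hdn) t ∈ g₀.support := by
      rw [mem_support_iff] at ht ⊢
      rw [← hg, coeff_rename_mapDomain _ (Fin.castLE_injective hdn) g t]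
      exact ht
    have h1 := key _ ht' (Fin.castLE hdn j)
    rw [Finsupp.mapDomain_apply (Fin.castLE_injective hdn)] at h1
    by_contra hcon
    push_neg at hcon
    have h2 : ((j : ℕ) + 1) * 2 ≤ ((j : ℕ) + 1) * t j :=
      Nat.mul_le_mul_left _ hcon
    have h3 : ((Fin.castLE hdn j : ℕ) : ℕ) = (j : ℕ) := rfl
    rw [h3] at h1
    omega
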